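/- arXiv:2510.13238 — 3 statements merged into one kernel-verified Lean document; each statement's English description precedes it below -/
import Mathlib

section
/- For γ, m > 0, t ∈ [0,1], δ ∈ (0,1), and f continuous on [0,t] with values in ℝ^d, one has |Ψ^m(f)(t) - (1 - e^{-γt/m}) f(t)| ≤ (2‖f‖_{∞,t} e^{-γδ/m} + sup_{t - min(t,δ) ≤ s ≤ t} |f(t) - f(s)|) · (1 - e^{-γt/m}), where Ψ^m(f)(t) = ∫₀ᵗ (γ/m) e^{-γ(t-s)/m} f(s) ds and ‖f‖_{∞,t} = sup_{0≤s≤t} |f(s)|. -/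
open MeasureTheory Set

set_option maxHeartbeats 1000000

lemma exp_integral_aux (c t u v : ℝ) :
    ∫ s in u..v, c * Real.exp (-(c * (t - s))) =
      Real.exp (-(c * (t - v))) - Real.exp (-(c * (t - u))) := by
  have hder : ∀ s ∈ Set.uIcc u v, HasDerivAt (fun s => Real.exp (-(c * (t - s))))
      (c * Real.exp (-(c * (t - s)))) s := by
    intro s _
    have h1 : HasDerivAt (fun s : ℝ => -(c * (t - s))) c s := by
      have h2 : (fun s : ℝ => -(c * (t - s))) = fun s : ℝ => c * s - c * t := by
        funext x; ring
      rw [h2]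
      simpa using ((hasDerivAt_id s).const_mul c).sub_const (c * t)
    simpa [mul_comm] using h1.exp
  refine intervalIntegral.integral_eq_sub_of_hasDerivAt hder ?_
  exact (Continuous.intervalIntegrable (by continuity) u v)

lemma piece_bound_aux {d : ℕ} (c t u v C : ℝ) (huv : u ≤ v)
    (g : ℝ → EuclideanSpace ℝ (Fin d))
    (hint : IntervalIntegrable (fun s => (c * Real.exp (-(c * (t - s)))) • g s) volume u v)
    (hc : 0 ≤ c)
    (hC : ∀ s ∈ Set.Icc u v, ‖g s‖ ≤ C) :
    ‖∫ s in u..v, (c * Real.exp (-(c * (t - s)))) • g s‖ ≤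
      C * (Real.exp (-(c * (t - v))) - Real.exp (-(c * (t - u)))) := by
  have hw0 : ∀ s : ℝ, 0 ≤ c * Real.exp (-(c * (t - s))) :=
    fun s => mul_nonneg hc (Real.exp_pos _).le
  calc ‖∫ s in u..v, (c * Real.exp (-(c * (t - s)))) • g s‖
      ≤ ∫ s in u..v, ‖(c * Real.exp (-(c * (t - s)))) • g s‖ :=
        intervalIntegral.norm_integral_le_integral_norm huv
    _ ≤ ∫ s in u..v, C * (c * Real.exp (-(c * (t - s)))) := by
        apply intervalIntegral.integral_mono_on huv hint.norm
        · exact Continuous.intervalIntegrable (by continuity) u v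
        · intro s hs
          rw [norm_smul, Real.norm_eq_abs, abs_of_nonneg (hw0 s)]
          rw [mul_comm C]
          exact mul_le_mul_of_nonneg_left (hC s hs) (hw0 s)
    _ = C * ∫ s in u..v, c * Real.exp (-(c * (t - s))) := by
        rw [intervalIntegral.integral_const_mul]
    _ = C * (Real.exp (-(c * (t - v))) - Real.exp (-(c * (t - u)))) := by
        rw [exp_integral_aux]

theorem psi_approx_identity {d : ℕ} (γ m t δ : ℝ) (hγ : 0 < γ) (hm : 0 < m)
    (ht : t ∈ Set.Icc (0:ℝ) 1) (hδ : δ ∈ Set.Ioo (0:ℝ) 1)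
    (f : ℝ → EuclideanSpace ℝ (Fin d)) (hf : ContinuousOn f (Set.Icc 0 t)) :
    ‖(∫ s in (0:ℝ)..t, ((γ / m) * Real.exp (-(γ * (t - s)) / m)) • f s)
        - (1 - Real.exp (-(γ * t) / m)) • f t‖ ≤
      (2 * sSup ((fun s => ‖f s‖) '' Set.Icc (0:ℝ) t) * Real.exp (-(γ * δ) / m)
          + sSup ((fun s => ‖f t - f s‖) '' Set.Icc (t - min t δ) t))
        * (1 - Real.exp (-(γ * t) / m)) := by
  obtain ⟨ht0, ht1⟩ := ht
  obtain ⟨hδ0, hδ1⟩ := hδ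
  set c := γ / m with hc
  have hc0 : 0 < c := div_pos hγ hm
  have hrw : ∀ x : ℝ, -(γ * x) / m = -(c * x) := fun x => by rw [hc]; ring
  simp only [hrw]
  set a := t - min t δ with ha
  have hmin0 : 0 ≤ min t δ := le_min ht0 hδ0.le
  have hmint : min t δ ≤ t := min_le_left _ _
  have ha0 : 0 ≤ a := sub_nonneg.mpr hmint
  have hat : a ≤ t := sub_le_self _ hmin0
  -- sup bounds
  set M := sSup ((fun s => ‖f s‖) '' Set.Icc (0:ℝ) t) with hMdef
  set S := sSup ((fun s => ‖f t - f s‖) '' Set.Icc a t) with hSdef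
  have hsub : Set.Icc a t ⊆ Set.Icc (0:ℝ) t := Set.Icc_subset_Icc ha0 le_rfl
  have hM : ∀ s ∈ Set.Icc (0:ℝ) t, ‖f s‖ ≤ M := by
    intro s hs
    exact le_csSup (isCompact_Icc.bddAbove_image hf.norm) ⟨s, hs, rfl⟩
  have hM0 : 0 ≤ M := le_trans (norm_nonneg _) (hM t ⟨ht0, le_rfl⟩)
  have hScont : ContinuousOn (fun s => ‖f t - f s‖) (Set.Icc a t) :=
    (continuousOn_const.sub (hf.mono hsub)).norm
  have hS : ∀ s ∈ Set.Icc a t, ‖f t - f s‖ ≤ S := by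
    intro s hs
    exact le_csSup (isCompact_Icc.bddAbove_image hScont) ⟨s, hs, rfl⟩
  have hS0 : 0 ≤ S := le_trans (norm_nonneg _) (hS t ⟨hat, le_rfl⟩)
  -- integrability
  have hwcont : Continuous (fun s : ℝ => c * Real.exp (-(c * (t - s)))) := by continuity
  have hfI : ContinuousOn f (Set.uIcc 0 t) := by rwa [Set.uIcc_of_le ht0]
  have hInt1 : IntervalIntegrable (fun s => (c * Real.exp (-(c * (t - s)))) • f s) volume 0 t :=
    (ContinuousOn.smul hwcont.continuousOn hfI).intervalIntegrable
  have hInt2 : IntervalIntegrable (fun s => (c * Real.exp (-(c * (t - s)))) • f t) volume 0 t :=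
    Continuous.intervalIntegrable (by continuity) 0 t
  have hIntg : IntervalIntegrable
      (fun s => (c * Real.exp (-(c * (t - s)))) • (f s - f t)) volume 0 t :=
    (ContinuousOn.smul hwcont.continuousOn (hfI.sub continuousOn_const)).intervalIntegrable
  have hIntg1 : IntervalIntegrable
      (fun s => (c * Real.exp (-(c * (t - s)))) • (f s - f t)) volume 0 a :=
    hIntg.mono_set (by rw [Set.uIcc_of_le ha0, Set.uIcc_of_le ht0]; exact Set.Icc_subset_Icc le_rfl hat)
  have hIntg2 : IntervalIntegrable
      (fun s => (c * Real.exp (-(c * (t - s)))) • (f s - f t)) volume a t :=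
    hIntg.mono_set (by rw [Set.uIcc_of_le hat, Set.uIcc_of_le ht0]; exact Set.Icc_subset_Icc ha0 le_rfl)
  -- total mass
  have hmass : ∫ s in (0:ℝ)..t, c * Real.exp (-(c * (t - s))) = 1 - Real.exp (-(c * t)) := by
    rw [exp_integral_aux]; simp
  -- rewrite difference as integral
  have key : (∫ s in (0:ℝ)..t, (c * Real.exp (-(c * (t - s)))) • f s)
      - (1 - Real.exp (-(c * t))) • f t
      = ∫ s in (0:ℝ)..t, (c * Real.exp (-(c * (t - s)))) • (f s - f t) := by
    rw [← hmass, ← intervalIntegral.integral_smul_const,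
      ← intervalIntegral.integral_sub hInt1 hInt2]
    simp [smul_sub]
  rw [key]
  -- split the integral
  rw [← intervalIntegral.integral_add_adjacent_intervals hIntg1 hIntg2]
  -- bound each piece
  have hb1 : ‖∫ s in (0:ℝ)..a, (c * Real.exp (-(c * (t - s)))) • (f s - f t)‖ ≤
      (2 * M) * (Real.exp (-(c * (t - a))) - Real.exp (-(c * (t - 0)))) := by
    apply piece_bound_aux c t 0 a (2 * M) ha0 _ hIntg1 hc0.le
    intro s hs
    have := norm_sub_le (f s) (f t)
    have h1 := hM s ⟨hs.1, le_trans hs.2 hat⟩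
    have h2 := hM t ⟨ht0, le_rfl⟩
    linarith
  have hb2 : ‖∫ s in a..t, (c * Real.exp (-(c * (t - s)))) • (f s - f t)‖ ≤
      S * (Real.exp (-(c * (t - t))) - Real.exp (-(c * (t - a)))) := by
    apply piece_bound_aux c t a t S hat _ hIntg2 hc0.le
    intro s hs
    rw [norm_sub_rev]
    exact hS s hs
  have htri := norm_add_le
    (∫ s in (0:ℝ)..a, (c * Real.exp (-(c * (t - s)))) • (f s - f t))
    (∫ s in a..t, (c * Real.exp (-(c * (t - s)))) • (f s - f t))
  have hta : t - a = min t δ := by rw [ha]; ring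
  -- exponential inequalities
  have hexp_le_one : Real.exp (-(c * t)) ≤ 1 :=
    Real.exp_le_one_iff.mpr (by nlinarith)
  have hB1 : Real.exp (-(c * min t δ)) - Real.exp (-(c * t)) ≤
      Real.exp (-(c * δ)) * (1 - Real.exp (-(c * t))) := by
    rcases le_total t δ with h | h
    · rw [min_eq_left h]
      have : (0:ℝ) ≤ Real.exp (-(c * δ)) * (1 - Real.exp (-(c * t))) :=
        mul_nonneg (Real.exp_pos _).le (by linarith)
      linarith
    · rw [min_eq_right h]
      have h1 : Real.exp (-(c * δ)) ≤ 1 := Real.exp_le_one_iff.mpr (by nlinarith)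
      have h2 : (0:ℝ) < Real.exp (-(c * t)) := Real.exp_pos _
      nlinarith
  have hB2 : 1 - Real.exp (-(c * min t δ)) ≤ 1 - Real.exp (-(c * t)) := by
    have : Real.exp (-(c * t)) ≤ Real.exp (-(c * min t δ)) :=
      Real.exp_le_exp.mpr (by nlinarith [min_le_left t δ])
    linarith
  rw [hta] at hb1 hb2
  simp only [sub_zero, sub_self, mul_zero, neg_zero, Real.exp_zero] at hb1 hb2
  calc ‖(∫ s in (0:ℝ)..a, (c * Real.exp (-(c * (t - s)))) • (f s - f t))
        + ∫ s in a..t, (c * Real.exp (-(c * (t - s)))) • (f s - f t)‖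
      ≤ (2 * M) * (Real.exp (-(c * min t δ)) - Real.exp (-(c * t)))
          + S * (1 - Real.exp (-(c * min t δ))) := by
        refine le_trans htri (add_le_add hb1 hb2)
    _ ≤ (2 * M) * (Real.exp (-(c * δ)) * (1 - Real.exp (-(c * t))))
          + S * (1 - Real.exp (-(c * t))) := by
        exact add_le_add (mul_le_mul_of_nonneg_left hB1 (by linarith))
          (mul_le_mul_of_nonneg_left hB2 hS0)
    _ = (2 * M * Real.exp (-(c * δ)) + S) * (1 - Real.exp (-(c * t))) := by ring
end

section
/- For γ, m > 0 and any continuous f : [0,1] → ℝ^d with f(0) = 0, and any δ ∈ (0,1), sup_{0≤t≤1} |Ψ^m(f)(t) - f(t)| ≤ 3‖f‖_∞ e^{-γδ/m} + 2 sup_{|t-s|≤δ, t,s∈[0,1]} |f(t) - f(s)|, where Ψ^m(f)(t) = ∫₀ᵗ (γ/m) e^{-γ(t-s)/m} f(s) ds. -/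
open MeasureTheory Set

lemma ker_int (l t a b : ℝ) :
    ∫ s in a..b, l * Real.exp (l * (s - t)) =
      Real.exp (l * (b - t)) - Real.exp (l * (a - t)) := by
  have h : ∀ x ∈ Set.uIcc a b, HasDerivAt (fun s => Real.exp (l * (s - t)))
      (l * Real.exp (l * (x - t))) x := by
    intro x _
    have h1 : HasDerivAt (fun s : ℝ => l * (s - t)) l x := by
      simpa using ((hasDerivAt_id x).sub_const t).const_mul l
    simpa [mul_comm] using h1.exp
  have hc : Continuous (fun s : ℝ => l * Real.exp (l * (s - t))) :=
    continuous_const.mul (Real.continuous_exp.comp (continuous_const.mul (continuous_id.sub continuous_const)))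
  exact intervalIntegral.integral_eq_sub_of_hasDerivAt h (hc.intervalIntegrable a b)

lemma bound_aux {d : ℕ} (l : ℝ) (hl : 0 < l) (f : ℝ → EuclideanSpace ℝ (Fin d))
    (t a b B : ℝ) (hab : a ≤ b) (hB0 : 0 ≤ B)
    (hint : IntervalIntegrable (fun s => (l * Real.exp (l * (s - t))) • (f s - f t)) volume a b)
    (hbd : ∀ s ∈ Set.Icc a b, ‖f s - f t‖ ≤ B) :
    ‖∫ s in a..b, (l * Real.exp (l * (s - t))) • (f s - f t)‖ ≤
      B * (Real.exp (l * (b - t)) - Real.exp (l * (a - t))) := by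
  have hpos : ∀ s : ℝ, 0 < l * Real.exp (l * (s - t)) := fun s => mul_pos hl (Real.exp_pos _)
  calc ‖∫ s in a..b, (l * Real.exp (l * (s - t))) • (f s - f t)‖
      ≤ ∫ s in a..b, ‖(l * Real.exp (l * (s - t))) • (f s - f t)‖ :=
        intervalIntegral.norm_integral_le_integral_norm hab
    _ ≤ ∫ s in a..b, (l * Real.exp (l * (s - t))) * B := by
        have hc : Continuous (fun s : ℝ => (l * Real.exp (l * (s - t))) * B) :=
          (continuous_const.mul (Real.continuous_exp.comp (continuous_const.mul (continuous_id.sub continuous_const)))).mul continuous_const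
        apply intervalIntegral.integral_mono_on hab hint.norm (hc.intervalIntegrable a b)
        intro s hs
        rw [norm_smul, Real.norm_eq_abs, abs_of_pos (hpos s)]
        exact mul_le_mul_of_nonneg_left (hbd s hs) (hpos s).le
    _ = B * (Real.exp (l * (b - t)) - Real.exp (l * (a - t))) := by
        rw [intervalIntegral.integral_mul_const, ker_int, mul_comm]

set_option maxHeartbeats 1000000 in
theorem psi_uniform_approx {d : ℕ} (γ m δ : ℝ) (hγ : 0 < γ) (hm : 0 < m)
    (hδ : δ ∈ Set.Ioo (0:ℝ) 1)
    (f : ℝ → EuclideanSpace ℝ (Fin d)) (hf : ContinuousOn f (Set.Icc 0 1))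
    (hf0 : f 0 = 0) :
    ∀ t ∈ Set.Icc (0:ℝ) 1,
      ‖(∫ s in (0:ℝ)..t, ((γ / m) * Real.exp (-(γ * (t - s)) / m)) • f s) - f t‖ ≤
        3 * sSup ((fun s => ‖f s‖) '' Set.Icc (0:ℝ) 1) * Real.exp (-(γ * δ) / m)
          + 2 * sSup ((fun p : ℝ × ℝ => ‖f p.1 - f p.2‖) ''
              {p : ℝ × ℝ | p.1 ∈ Set.Icc (0:ℝ) 1 ∧ p.2 ∈ Set.Icc (0:ℝ) 1 ∧ |p.1 - p.2| ≤ δ}) := by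
  obtain ⟨hδ0, hδ1⟩ := hδ
  intro t ht
  obtain ⟨ht0, ht1⟩ := ht
  set l := γ / m with hldef
  have hl : 0 < l := div_pos hγ hm
  have hexp : ∀ s : ℝ, -(γ * (t - s)) / m = l * (s - t) := by
    intro s; rw [hldef]; ring
  have hexpδ : -(γ * δ) / m = l * (0 - δ) := by rw [hldef]; ring
  simp only [hexp, hexpδ]
  set S := {p : ℝ × ℝ | p.1 ∈ Set.Icc (0:ℝ) 1 ∧ p.2 ∈ Set.Icc (0:ℝ) 1 ∧ |p.1 - p.2| ≤ δ}
    with hSdef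
  set M := sSup ((fun s => ‖f s‖) '' Set.Icc (0:ℝ) 1) with hMdef
  set ω := sSup ((fun p : ℝ × ℝ => ‖f p.1 - f p.2‖) '' S) with hωdef
  -- bounds via sSup
  have hMbdd : BddAbove ((fun s => ‖f s‖) '' Set.Icc (0:ℝ) 1) :=
    (isCompact_Icc.image_of_continuousOn hf.norm).bddAbove
  have hM : ∀ s ∈ Set.Icc (0:ℝ) 1, ‖f s‖ ≤ M := fun s hs => le_csSup hMbdd ⟨s, hs, rfl⟩
  have hM0 : 0 ≤ M := le_trans (norm_nonneg _) (hM 0 ⟨le_refl 0, zero_le_one⟩)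
  have hScl : IsClosed S := by
    have : S = (fun p : ℝ × ℝ => p.1) ⁻¹' Set.Icc 0 1 ∩
        ((fun p : ℝ × ℝ => p.2) ⁻¹' Set.Icc 0 1 ∩
          (fun p : ℝ × ℝ => |p.1 - p.2|) ⁻¹' Set.Iic δ) := rfl
    rw [this]
    exact (isClosed_Icc.preimage continuous_fst).inter
      ((isClosed_Icc.preimage continuous_snd).inter (isClosed_Iic.preimage (by continuity)))
  have hScpt : IsCompact S :=
    (isCompact_Icc.prod isCompact_Icc).of_isClosed_subset hScl (fun p hp => ⟨hp.1, hp.2.1⟩)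
  have hScont : ContinuousOn (fun p : ℝ × ℝ => ‖f p.1 - f p.2‖) S :=
    ((hf.comp continuous_fst.continuousOn fun p hp => hp.1).sub
      (hf.comp continuous_snd.continuousOn fun p hp => hp.2.1)).norm
  have hωbdd : BddAbove ((fun p : ℝ × ℝ => ‖f p.1 - f p.2‖) '' S) :=
    (hScpt.image_of_continuousOn hScont).bddAbove
  have hω : ∀ p ∈ S, ‖f p.1 - f p.2‖ ≤ ω := fun p hp => le_csSup hωbdd ⟨p, hp, rfl⟩
  have h00 : ((0:ℝ), (0:ℝ)) ∈ S := by
    refine ⟨⟨le_refl 0, zero_le_one⟩, ⟨le_refl 0, zero_le_one⟩, ?_⟩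
    simp; linarith
  have hω0 : 0 ≤ ω := le_trans (norm_nonneg _) (hω (0, 0) h00)
  -- integrability
  have hkc : Continuous (fun s : ℝ => l * Real.exp (l * (s - t))) :=
    continuous_const.mul (Real.continuous_exp.comp (continuous_const.mul (continuous_id.sub continuous_const)))
  have hcont : ∀ a b : ℝ, a ∈ Set.Icc (0:ℝ) 1 → b ∈ Set.Icc (0:ℝ) 1 →
      IntervalIntegrable (fun s => (l * Real.exp (l * (s - t))) • (f s - f t)) volume a b := by
    intro a b ha hb
    apply ContinuousOn.intervalIntegrable
    exact hkc.continuousOn.smul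
      (((hf.mono (Set.uIcc_subset_Icc ha hb)).sub continuousOn_const))
  have hcontf : IntervalIntegrable (fun s => (l * Real.exp (l * (s - t))) • f s) volume 0 t := by
    apply ContinuousOn.intervalIntegrable
    exact hkc.continuousOn.smul
      (hf.mono (Set.uIcc_subset_Icc ⟨le_refl 0, zero_le_one⟩ ⟨ht0, ht1⟩))
  have hcontc : IntervalIntegrable (fun s => (l * Real.exp (l * (s - t))) • f t) volume 0 t :=
    (hkc.smul continuous_const).intervalIntegrable 0 t
  -- key identity
  have key : (∫ s in (0:ℝ)..t, (l * Real.exp (l * (s - t))) • f s) - f t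
      = (∫ s in (0:ℝ)..t, (l * Real.exp (l * (s - t))) • (f s - f t))
          - Real.exp (l * (0 - t)) • f t := by
    have h1 : (∫ s in (0:ℝ)..t, (l * Real.exp (l * (s - t))) • (f s - f t))
        = (∫ s in (0:ℝ)..t, (l * Real.exp (l * (s - t))) • f s)
          - (∫ s in (0:ℝ)..t, l * Real.exp (l * (s - t))) • f t := by
      rw [← intervalIntegral.integral_smul_const,
        ← intervalIntegral.integral_sub hcontf hcontc]
      simp [smul_sub]
    rw [h1, ker_int]
    have : t - t = 0 := by ring
    rw [this, mul_zero, Real.exp_zero, sub_smul, one_smul]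
    abel
  rw [key]
  set I := ∫ s in (0:ℝ)..t, (l * Real.exp (l * (s - t))) • (f s - f t) with hIdef
  have hnorm : ‖I - Real.exp (l * (0 - t)) • f t‖ ≤ ‖I‖ + Real.exp (l * (0 - t)) * ‖f t‖ := by
    refine (norm_sub_le _ _).trans ?_
    rw [norm_smul, Real.norm_eq_abs, abs_of_pos (Real.exp_pos _)]
  have hEδpos : 0 < Real.exp (l * (0 - δ)) := Real.exp_pos _
  rcases le_or_gt t δ with hcase | hcase
  · -- small t
    have hbd : ∀ s ∈ Set.Icc (0:ℝ) t, ‖f s - f t‖ ≤ ω := by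
      intro s hs
      exact hω (s, t) ⟨⟨hs.1, hs.2.trans ht1⟩, ⟨ht0, ht1⟩, by
        rw [abs_le]; constructor <;> linarith [hs.1, hs.2]⟩
    have hI : ‖I‖ ≤ ω * (Real.exp (l * (t - t)) - Real.exp (l * (0 - t))) :=
      bound_aux l hl f t 0 t ω ht0 hω0 (hcont 0 t ⟨le_refl 0, zero_le_one⟩ ⟨ht0, ht1⟩) hbd
    have hI' : ‖I‖ ≤ ω := by
      refine hI.trans ?_
      have h1 : t - t = 0 := by ring
      rw [h1, mul_zero, Real.exp_zero]
      nlinarith [mul_nonneg hω0 (Real.exp_pos (l * (0 - t))).le]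
    have hft : ‖f t‖ ≤ ω := by
      have := hω (t, 0) ⟨⟨ht0, ht1⟩, ⟨le_refl 0, zero_le_one⟩, by
        show |t - 0| ≤ δ
        rw [sub_zero, abs_of_nonneg ht0]; linarith⟩
      simpa [hf0] using this
    have hexple : Real.exp (l * (0 - t)) ≤ 1 := by
      rw [show (1:ℝ) = Real.exp 0 by simp]
      apply Real.exp_le_exp.mpr
      nlinarith
    refine (hnorm.trans ?_)
    have h2 : Real.exp (l * (0 - t)) * ‖f t‖ ≤ 1 * ω :=
      mul_le_mul hexple hft (norm_nonneg _) zero_le_one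
    nlinarith [mul_nonneg hM0 hEδpos.le]
  · -- large t
    have htδ : t - δ ∈ Set.Icc (0:ℝ) 1 := ⟨by linarith, by linarith⟩
    have hsplit : I = (∫ s in (0:ℝ)..(t - δ), (l * Real.exp (l * (s - t))) • (f s - f t))
        + (∫ s in (t - δ)..t, (l * Real.exp (l * (s - t))) • (f s - f t)) := by
      rw [hIdef, ← intervalIntegral.integral_add_adjacent_intervals
        (hcont 0 (t - δ) ⟨le_refl 0, zero_le_one⟩ htδ) (hcont (t - δ) t htδ ⟨ht0, ht1⟩)]
    have hbd1 : ∀ s ∈ Set.Icc (0:ℝ) (t - δ), ‖f s - f t‖ ≤ 2 * M := by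
      intro s hs
      have h1 : ‖f s‖ ≤ M := hM s ⟨hs.1, by linarith [hs.2]⟩
      have h2 : ‖f t‖ ≤ M := hM t ⟨ht0, ht1⟩
      calc ‖f s - f t‖ ≤ ‖f s‖ + ‖f t‖ := norm_sub_le _ _
        _ ≤ 2 * M := by linarith
    have hI1 : ‖∫ s in (0:ℝ)..(t - δ), (l * Real.exp (l * (s - t))) • (f s - f t)‖
        ≤ 2 * M * Real.exp (l * (0 - δ)) := by
      have := bound_aux l hl f t 0 (t - δ) (2 * M) (by linarith) (by linarith)
        (hcont 0 (t - δ) ⟨le_refl 0, zero_le_one⟩ htδ) hbd1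
      refine this.trans ?_
      have h1 : t - δ - t = 0 - δ := by ring
      rw [h1]
      nlinarith [mul_nonneg hM0 (Real.exp_pos (l * (0 - t))).le]
    have hbd2 : ∀ s ∈ Set.Icc (t - δ) t, ‖f s - f t‖ ≤ ω := by
      intro s hs
      exact hω (s, t) ⟨⟨by linarith [hs.1], hs.2.trans ht1⟩, ⟨ht0, ht1⟩, by
        rw [abs_le]; constructor <;> linarith [hs.1, hs.2]⟩
    have hI2 : ‖∫ s in (t - δ)..t, (l * Real.exp (l * (s - t))) • (f s - f t)‖ ≤ ω := by
      have := bound_aux l hl f t (t - δ) t ω (by linarith) hω0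
        (hcont (t - δ) t htδ ⟨ht0, ht1⟩) hbd2
      refine this.trans ?_
      have h1 : t - t = 0 := by ring
      rw [h1, mul_zero, Real.exp_zero]
      nlinarith [mul_nonneg hω0 (Real.exp_pos (l * (t - δ - t))).le]
    have hI' : ‖I‖ ≤ 2 * M * Real.exp (l * (0 - δ)) + ω := by
      rw [hsplit]
      exact (norm_add_le _ _).trans (by linarith)
    have hft : Real.exp (l * (0 - t)) * ‖f t‖ ≤ Real.exp (l * (0 - δ)) * M := by
      apply mul_le_mul ?_ (hM t ⟨ht0, ht1⟩) (norm_nonneg _) hEδpos.le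
      apply Real.exp_le_exp.mpr
      nlinarith
    refine hnorm.trans ?_
    linarith
end

section
/- Let γ, m > 0 and define f^m(t) := 1 - e^{-γ(1-t)/m} and φ^m(t) := 1 - ∫_t^1 f^m(s)² ds for t ∈ [0,1]. Then 0 ≤ φ^m(t) - t ≤ 2m/γ for all t ∈ [0,1]. -/
open MeasureTheory Set

theorem time_change_close_to_identity (γ m : ℝ) (hγ : 0 < γ) (hm : 0 < m) :
    ∀ t ∈ Set.Icc (0:ℝ) 1,
      0 ≤ (1 - ∫ s in t..(1:ℝ), (1 - Real.exp (-(γ * (1 - s)) / m)) ^ 2) - t ∧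
      (1 - ∫ s in t..(1:ℝ), (1 - Real.exp (-(γ * (1 - s)) / m)) ^ 2) - t ≤ 2 * m / γ := by
  intro t ht
  obtain ⟨ht0, ht1⟩ := ht
  have ha : 0 < γ / m := div_pos hγ hm
  set a := γ / m with ha_def
  set F : ℝ → ℝ := fun s => s - (2 / a) * Real.exp (-(γ * (1 - s)) / m)
      + (1 / (2 * a)) * (Real.exp (-(γ * (1 - s)) / m)) ^ 2 with hF_def
  have hderiv : ∀ s : ℝ, HasDerivAt F ((1 - Real.exp (-(γ * (1 - s)) / m)) ^ 2) s := by
    intro s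
    have h1 : HasDerivAt (fun x : ℝ => -(γ * (1 - x)) / m) (γ / m) s := by
      have h := ((((hasDerivAt_id s).const_sub (1 : ℝ)).const_mul γ).neg).div_const m
      convert h using 1
      · rfl
      · rfl
      · rfl
      · ring
    have hE : HasDerivAt (fun x : ℝ => Real.exp (-(γ * (1 - x)) / m))
        (Real.exp (-(γ * (1 - s)) / m) * (γ / m)) s := h1.exp
    have hFd : HasDerivAt F
        (1 - (2 / a) * (Real.exp (-(γ * (1 - s)) / m) * (γ / m))
          + (1 / (2 * a)) * ((2 : ℕ) * Real.exp (-(γ * (1 - s)) / m) ^ 1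
              * (Real.exp (-(γ * (1 - s)) / m) * (γ / m)))) s :=
      ((hasDerivAt_id s).sub (hE.const_mul (2 / a))).add ((hE.pow 2).const_mul (1 / (2 * a)))
    convert hFd using 1
    have haa : a ≠ 0 := ne_of_gt ha
    rw [ha_def]
    field_simp
    ring
  have hcont : Continuous fun s : ℝ => (1 - Real.exp (-(γ * (1 - s)) / m)) ^ 2 := by
    continuity
  have hint : (∫ s in t..(1:ℝ), (1 - Real.exp (-(γ * (1 - s)) / m)) ^ 2) = F 1 - F t :=
    intervalIntegral.integral_eq_sub_of_hasDerivAt (fun s _ => hderiv s)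
      (hcont.intervalIntegrable t 1)
  rw [hint]
  simp only [hF_def]
  set E := Real.exp (-(γ * (1 - t)) / m) with hE_def
  have hE0 : 0 < E := Real.exp_pos _
  have hE1 : E ≤ 1 := by
    rw [hE_def, Real.exp_le_one_iff]
    apply div_nonpos_of_nonpos_of_nonneg _ hm.le
    nlinarith
  have h1 : -(γ * (1 - (1:ℝ))) / m = 0 := by ring
  rw [h1, Real.exp_zero]
  have haa : a ≠ 0 := ne_of_gt ha
  have key : (1 - ((1 - 2 / a * 1 + 1 / (2 * a) * 1 ^ 2)
      - (t - 2 / a * E + 1 / (2 * a) * E ^ 2))) - t = (1 - E) * (3 - E) / (2 * a) := by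
    field_simp
    ring
  rw [key]
  have h2a : 2 * m / γ = 2 / a := by
    rw [ha_def]
    field_simp
  constructor
  · apply div_nonneg (mul_nonneg (by linarith) (by linarith)) (by positivity)
  · rw [h2a, div_le_div_iff₀ (by positivity) ha]
    nlinarith [mul_pos hE0 ha, mul_nonneg (mul_nonneg (sub_nonneg.2 hE1) hE0.le) ha.le]
end
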